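/- Let n≥0, A even with 1≤r≤A/2, and define R_n(T;q) = (q;q)_n^{A-2r} q^{-(A-2r)n/4} · (q^{-rn}T;q)_{rn} (q^{n+1}T;q)_{rn} / (T;q)_{n+1}^A · T^{(A-2r)n/2}. Then R_n(q^n T; 1/q) = R_n(T; q) as rational functions of T. -/

import Mathlib

/-- The rational function `R_n(T;q)` of the paper: for `n ≥ 0`, `A` even, `1 ≤ r ≤ A/2`,
`R_n(T;q) = (q;q)_n^{A-2r} q^{-(A-2r)n/4} (q^{-rn}T;q)_{rn}(q^{n+1}T;q)_{rn}/(T;q)_{n+1}^A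
  · T^{(A-2r)n/2}` (for real `q > 0`, the fractional power of `q` being a real power). -/
noncomputable def Rn (A r n : ℕ) (q T : ℝ) : ℝ :=
  (∏ i ∈ Finset.range n, (1 - q ^ (i + 1))) ^ (A - 2 * r) *
    q ^ (-(((A : ℝ) - 2 * r) * n / 4)) *
    ((∏ i ∈ Finset.range (r * n), (1 - q ^ ((i : ℤ) - (r * n : ℤ)) * T)) *
      ∏ i ∈ Finset.range (r * n), (1 - q ^ (n + 1 + i) * T)) /
    (∏ i ∈ Finset.range (n + 1), (1 - q ^ i * T)) ^ A *
    T ^ ((A - 2 * r) * n / 2)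

lemma Rn_aux1 (q : ℝ) (hq : q ≠ 0) (n : ℕ) :
    ∏ i ∈ Finset.range n, (1 - (1/q) ^ (i+1)) =
      (-1)^n * (q ^ (∑ i ∈ Finset.range n, (i+1)))⁻¹ *
        ∏ i ∈ Finset.range n, (1 - q ^ (i+1)) := by
  induction n with
  | zero => simp
  | succ n ih =>
      have h : (1 - (1/q) ^ (n+1)) = -((q^(n+1))⁻¹) * (1 - q^(n+1)) := by
        field_simp
        rw [one_div, inv_pow, sub_mul, inv_mul_cancel₀ (pow_ne_zero _ hq)]; ring
      rw [Finset.prod_range_succ, ih, h, Finset.prod_range_succ, Finset.sum_range_succ, pow_add]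
      field_simp
      ring

lemma Rn_aux4 (q T : ℝ) (hq : q ≠ 0) (n : ℕ) :
    ∏ i ∈ Finset.range (n+1), (1 - (1/q)^i * (q^n * T)) =
      ∏ i ∈ Finset.range (n+1), (1 - q^i * T) := by
  rw [← Finset.prod_range_reflect (fun i => 1 - q^i*T) (n+1)]
  refine Finset.prod_congr rfl fun j hj => ?_
  simp only [Finset.mem_range] at hj
  have hn : n + 1 - 1 - j = n - j := by omega
  have h : q ^ n = q^(n-j) * q^j := by rw [← pow_add]; congr 1; omega
  rw [hn, h, one_div, inv_pow]
  field_simp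

lemma Rn_aux3a (q T : ℝ) (hq : q ≠ 0) (n m : ℕ) :
    ∏ i ∈ Finset.range m, (1 - (1/q) ^ ((i : ℤ) - (m : ℤ)) * (q^n * T)) =
      ∏ i ∈ Finset.range m, (1 - q ^ (n + 1 + i) * T) := by
  rw [← Finset.prod_range_reflect (fun i => 1 - q^(n+1+i)*T) m]
  refine Finset.prod_congr rfl fun j hj => ?_
  simp only [Finset.mem_range] at hj
  have h1 : ((1/q) : ℝ) ^ ((j : ℤ) - (m : ℤ)) = q ^ ((m : ℤ) - j) := by
    rw [one_div, inv_zpow, ← zpow_neg]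
    congr 1; ring
  have h2 : n + 1 + (m - 1 - j) = (m - j) + n := by omega
  rw [h1, h2, pow_add]
  have h3 : (q : ℝ) ^ ((m:ℤ) - j) = q ^ (m - j : ℕ) := by
    rw [← zpow_natCast q (m - j)]
    congr 1; omega
  rw [h3]; ring

lemma Rn_aux3b (q T : ℝ) (hq : q ≠ 0) (n m : ℕ) :
    ∏ i ∈ Finset.range m, (1 - (1/q) ^ (n + 1 + i) * (q^n * T)) =
      ∏ i ∈ Finset.range m, (1 - q ^ ((i : ℤ) - (m : ℤ)) * T) := by
  rw [← Finset.prod_range_reflect (fun i => 1 - q^((i:ℤ) - (m:ℤ))*T) m]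
  refine Finset.prod_congr rfl fun j hj => ?_
  simp only [Finset.mem_range] at hj
  have h1 : (((m - 1 - j : ℕ) : ℤ) - (m : ℤ)) = -(1 + j) := by omega
  have h2 : ((1/q) : ℝ) ^ (n + 1 + j) * (q ^ n * T) = q ^ (-(1 + (j:ℤ))) * T := by
    rw [one_div, inv_pow, zpow_neg, ← zpow_natCast q (n+1+j), ← zpow_natCast q n]
    have h3 : ((n+1+j : ℕ) : ℤ) = (n : ℤ) + (1 + j) := by push_cast; ring
    rw [h3, zpow_add₀ hq, mul_inv]
    have hn0 : q ^ (n:ℤ) ≠ 0 := zpow_ne_zero _ hq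
    field_simp
  rw [h1, ← h2]

lemma Rn_key (q : ℝ) (hq : 0 < q) (s k n : ℕ) (hsR : (s:ℝ)*2 = ((n:ℝ)+1)*n) :
    ((-1:ℝ)^n)^(2*k) * ((((q:ℝ)^s)⁻¹)^(2*k) *
        ((1/q) ^ (-((2*(k:ℝ))*(n:ℝ)/4)) * ((q:ℝ)^n)^(k*n)))
      = q ^ (-((2*(k:ℝ))*(n:ℝ)/4)) := by
  have h1 : ((-1:ℝ)^n)^(2*k) = 1 := by
    rw [← pow_mul]; exact Even.neg_one_pow ⟨n*k, by ring⟩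
  have e1 : (((q:ℝ)^s)⁻¹)^(2*k) = q ^ (-((s:ℝ) * (2*k : ℕ))) := by
    rw [← Real.rpow_natCast q s, ← Real.rpow_neg hq.le,
      ← Real.rpow_natCast (q ^ (-(s:ℝ))) (2*k), ← Real.rpow_mul hq.le]
    ring_nf
  have e2 : ((q:ℝ)^n)^(k*n) = q ^ ((n:ℝ) * (k*n : ℕ)) := by
    rw [← Real.rpow_natCast q n, ← Real.rpow_natCast (q ^ (n:ℝ)) (k*n), ← Real.rpow_mul hq.le]
  have e3 : ((1/q) : ℝ) ^ (-((2*(k:ℝ))*(n:ℝ)/4)) = q ^ ((2*(k:ℝ))*(n:ℝ)/4) := by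
    rw [one_div, Real.inv_rpow hq.le, ← Real.rpow_neg hq.le, neg_neg]
  rw [h1, one_mul, e1, e2, e3, ← Real.rpow_add hq, ← Real.rpow_add hq]
  congr 1
  push_cast
  linear_combination (-(k:ℝ)) * hsR

/-- `R_n(q^n T; 1/q) = R_n(T; q)` as rational functions of `T`. -/
theorem Rn_symmetry (A r n : ℕ) (hA : Even A) (hr : 1 ≤ r) (hr2 : 2 * r ≤ A)
    (q : ℝ) (hq : 0 < q) :
    ∀ T : ℝ, Rn A r n (1 / q) (q ^ n * T) = Rn A r n q T := by
  intro T
  have hq' : q ≠ 0 := hq.ne'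
  obtain ⟨k, hk⟩ : Even (A - 2*r) := (Nat.even_sub hr2).mpr (iff_of_true hA (even_two_mul r))
  have hm : A - 2*r = 2*k := by omega
  have hcast : (A:ℝ) - 2*r = 2*(k:ℝ) := by
    have hA' : A = 2*r + 2*k := by omega
    rw [hA']; push_cast; ring
  have hE2 : 2*k*n/2 = k*n := by
    rw [mul_assoc]; exact Nat.mul_div_cancel_left _ (by norm_num)
  have hsR : ((∑ i ∈ Finset.range n, (i+1) : ℕ) : ℝ)*2 = ((n:ℝ)+1)*n := by
    have h0 : ∑ i ∈ Finset.range (n+1), i = ∑ i ∈ Finset.range n, (i+1) := by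
      rw [Finset.sum_range_succ']; simp
    have h1 : (∑ i ∈ Finset.range n, (i+1)) * 2 = (n+1)*n := by
      rw [← h0]; exact Finset.sum_range_id_mul_two (n+1)
    exact_mod_cast congrArg (Nat.cast : ℕ → ℝ) h1
  unfold Rn
  rw [Rn_aux1 q hq' n, Rn_aux4 q T hq' n]
  simp only [← Nat.cast_mul]
  rw [Rn_aux3a q T hq' n (r*n), Rn_aux3b q T hq' n (r*n)]
  rw [hm, hcast, hE2, mul_pow, mul_pow ((-1:ℝ)^n), mul_pow (q^n) T]
  have key := Rn_key q hq (∑ i ∈ Finset.range n, (i+1)) k n hsR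
  set P1 := ∏ i ∈ Finset.range n, (1 - q ^ (i+1)) with hP1
  set P2 := ∏ i ∈ Finset.range (r*n), (1 - q ^ ((i:ℤ) - ((r*n : ℕ):ℤ)) * T) with hP2
  set P3 := ∏ i ∈ Finset.range (r*n), (1 - q ^ (n+1+i) * T) with hP3
  set P4 := ∏ i ∈ Finset.range (n+1), (1 - q ^ i * T) with hP4
  linear_combination key * (P1^(2*k) * (P3*P2) * ((P4^A)⁻¹) * T^(k*n))
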